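/- For every r ≥ 0, every t > 0 and all i, j ∈ {1,…,d}, ∫_{ℝ^d} e^{r|ψ|} |K^{ji}(ψ,t)| dψ ≤ a₁^{(d+2)/2} · e^{−b₀ t} · (t|α|)^{−1} · ( I_{d+1}(νt) + (δ_{ij}/2) · a₁^{−1} · I_{d−1}(νt) ), where ν := |α|² r² / Re α and δ_{ij} is the Kronecker delta. -/

import Mathlib

open MeasureTheory RealInnerProductSpace

/-- Rotation `e^{tS}x` given by the matrix exponential. -/
noncomputable def ouRot (d : ℕ) (S : Matrix (Fin d) (Fin d) ℝ) (t : ℝ)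
    (x : EuclideanSpace ℝ (Fin d)) : EuclideanSpace ℝ (Fin d) :=
  WithLp.toLp 2 (Matrix.mulVec (NormedSpace.exp (t • S)) x)

/-- The radial kernel `K(ψ,t) = (4παt)^{-d/2} exp(-δt - |ψ|²/(4αt))`. -/
noncomputable def ouK (d : ℕ) (α δ : ℂ) (ψ : EuclideanSpace ℝ (Fin d)) (t : ℝ) : ℂ :=
  (4 * (Real.pi : ℂ) * α * t) ^ (-(d : ℂ) / 2) *
    Complex.exp (-(δ * t) - ((‖ψ‖ ^ 2 : ℝ) : ℂ) / (4 * α * t))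

/-- The second-derivative radial kernel
`K^{ji}(ψ,t) = ((2tα)⁻² ⟨ψ, e^{tS}e_i⟩⟨ψ, e^{tS}e_j⟩ - (2tα)⁻¹ δ_{ij}) K(ψ,t)`. -/
noncomputable def ouKji (d : ℕ) (α δ : ℂ) (S : Matrix (Fin d) (Fin d) ℝ)
    (j i : Fin d) (ψ : EuclideanSpace ℝ (Fin d)) (t : ℝ) : ℂ :=
  (((2 * t * α)⁻¹) ^ 2 *
      ((⟪ψ, ouRot d S t (EuclideanSpace.single i (1 : ℝ))⟫ : ℝ) : ℂ) *
      ((⟪ψ, ouRot d S t (EuclideanSpace.single j (1 : ℝ))⟫ : ℝ) : ℂ)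
    - (2 * t * α)⁻¹ * (if i = j then 1 else 0)) * ouK d α δ ψ t

/-- `I_m(μ) = (2/Γ(d/2)) ∫_0^∞ s^m e^{-s² + 2√μ s} ds`. -/
noncomputable def ouI (d m : ℕ) (μ : ℝ) : ℝ :=
  (2 / Real.Gamma ((d : ℝ) / 2)) *
    ∫ s in Set.Ioi (0 : ℝ), s ^ m * Real.exp (-s ^ 2 + 2 * Real.sqrt μ * s)

open Set

section ouAux

lemma ouRot_norm (d : ℕ) (S : Matrix (Fin d) (Fin d) ℝ) (hS : S.transpose = -S) (t : ℝ)
    (x : EuclideanSpace ℝ (Fin d)) : ‖ouRot d S t x‖ = ‖x‖ := by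
  set M := NormedSpace.exp (t • S) with hM
  have h1 : (t • S).transpose = -(t • S) := by
    rw [Matrix.transpose_smul, hS, smul_neg]
  have h2 : M.transpose * M = 1 := by
    rw [hM, ← Matrix.exp_transpose, h1, ← Matrix.exp_add_of_commute (-(t • S)) (t • S) (Commute.refl _).neg_left,
      neg_add_cancel, NormedSpace.exp_zero]
  have key : ⟪ouRot d S t x, ouRot d S t x⟫ = ⟪x, x⟫ := by
    simp only [ouRot, PiLp.inner_apply, RCLike.inner_apply, conj_trivial, ← hM]
    have h3 : ∀ u v : Fin d → ℝ, ∑ i, u i * v i = dotProduct u v := fun _ _ => rfl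
    rw [h3, h3, Matrix.dotProduct_mulVec, ← Matrix.mulVec_transpose,
      Matrix.mulVec_mulVec, h2, Matrix.one_mulVec]
  rw [real_inner_self_eq_norm_sq, real_inner_self_eq_norm_sq] at key
  rw [← Real.sqrt_sq (norm_nonneg (ouRot d S t x)), key, Real.sqrt_sq (norm_nonneg x)]

lemma abs_ouK (d : ℕ) (α δ : ℂ) (hα : 0 < α.re) (ψ : EuclideanSpace ℝ (Fin d)) (t : ℝ) (ht : 0 < t) :
    ‖ouK d α δ ψ t‖
      = (4 * Real.pi * ‖α‖ * t) ^ (-(d:ℝ)/2) *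
        Real.exp (-δ.re * t - α.re / (4 * ‖α‖ ^ 2 * t) * ‖ψ‖^2) := by
  have hπ := Real.pi_pos
  have hα0 : α ≠ 0 := fun h => by simp [h] at hα
  have ha : 0 < ‖α‖ := norm_pos_iff.mpr hα0
  have ht0 : (t:ℂ) ≠ 0 := Complex.ofReal_ne_zero.mpr ht.ne'
  have hπ0 : ((Real.pi : ℝ):ℂ) ≠ 0 := Complex.ofReal_ne_zero.mpr hπ.ne'
  have hz : (4 * (Real.pi : ℂ) * α * t) ≠ 0 :=
    mul_ne_zero (mul_ne_zero (mul_ne_zero (by norm_num) hπ0) hα0) ht0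
  rw [ouK, norm_mul, Complex.norm_cpow_of_ne_zero hz, Complex.norm_exp]
  have him : (-(d : ℂ) / 2).im = 0 := by simp
  have hre : (-(d : ℂ) / 2).re = -(d:ℝ)/2 := by simp
  rw [him, hre, mul_zero, Real.exp_zero, div_one]
  have habs : ‖(4 * (Real.pi : ℂ) * α * t)‖ = 4 * Real.pi * ‖α‖ * t := by
    simp only [norm_mul, Complex.norm_real, Complex.norm_ofNat, Real.norm_eq_abs]
    rw [abs_of_pos hπ, abs_of_pos ht]
  rw [habs]
  congr 2
  have hsq : ‖α‖ ^ 2 = α.re^2 + α.im^2 := by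
    rw [Complex.sq_norm, Complex.normSq_apply]; ring
  rw [Complex.sub_re, Complex.neg_re, Complex.div_re, hsq]
  simp only [Complex.mul_re, Complex.mul_im, Complex.ofReal_re, Complex.ofReal_im,
    Complex.normSq_apply, Complex.ofReal_ofNat, Complex.re_ofNat, Complex.im_ofNat]
  have h16 : t ^ 2 * α.re ^ 2 * 16 + t ^ 2 * α.im ^ 2 * 16 ≠ 0 := by positivity
  have e1 : (t ^ 2 * α.re ^ 2 * 16 + t ^ 2 * α.im ^ 2 * 16)⁻¹ *
      (t ^ 2 * α.re ^ 2 * 16 + t ^ 2 * α.im ^ 2 * 16) = 1 := inv_mul_cancel₀ h16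
  field_simp [h16]
  linear_combination (-(‖ψ‖^2 * α.re)) * e1

lemma lin_le_sq {β : ℝ} (hβ : 0 < β) (r ρ : ℝ) : r*ρ - (β/2)*ρ^2 ≤ r^2/(2*β) := by
  rw [le_div_iff₀ (by positivity)]
  nlinarith [sq_nonneg (β*ρ - r)]

lemma int_pm (m : ℕ) {β : ℝ} (hβ : 0 < β) (r : ℝ) :
    IntegrableOn (fun ρ => ρ^m * Real.exp (r*ρ - β*ρ^2)) (Ioi (0:ℝ)) := by
  have hg : IntegrableOn (fun ρ => Real.exp (r^2/(2*β)) * (ρ^(m:ℝ) * Real.exp (-(β/2)*ρ^2)))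
      (Ioi (0:ℝ)) :=
    (integrableOn_rpow_mul_exp_neg_mul_sq (half_pos hβ) (by
      have : (0:ℝ) ≤ m := Nat.cast_nonneg m
      linarith)).const_mul _
  apply Integrable.mono' hg
  · exact (Continuous.aestronglyMeasurable (by continuity)).restrict
  · filter_upwards [ae_restrict_mem measurableSet_Ioi] with ρ hρ
    have hρ0 : 0 < ρ := hρ
    rw [Real.norm_eq_abs, abs_of_nonneg (by positivity)]
    rw [Real.rpow_natCast]
    have h1 : r*ρ - β*ρ^2 = (r*ρ - (β/2)*ρ^2) + (-(β/2)*ρ^2) := by ring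
    rw [h1, Real.exp_add]
    have h2 : (0:ℝ) ≤ ρ^m * Real.exp (-(β/2)*ρ^2) := by positivity
    nlinarith [mul_le_mul_of_nonneg_right (Real.exp_le_exp.mpr (lin_le_sq hβ r ρ)) h2]

lemma sub_int (m : ℕ) {β c : ℝ} (hc : 0 < c) (hβc : β*c^2 = 1) (r : ℝ) :
    ∫ ρ in Ioi (0:ℝ), ρ^m * Real.exp (r*ρ - β*ρ^2)
      = c^(m+1) * ∫ s in Ioi (0:ℝ), s^m * Real.exp (-s^2 + (r*c)*s) := by
  have h := integral_comp_mul_left_Ioi (fun ρ => ρ^m * Real.exp (r*ρ - β*ρ^2)) 0 hc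
  rw [mul_zero] at h
  have h2 : ∀ s : ℝ, (c*s)^m * Real.exp (r*(c*s) - β*(c*s)^2)
      = c^m * (s^m * Real.exp (-s^2 + (r*c)*s)) := by
    intro s
    have h3 : r*(c*s) - β*(c*s)^2 = -s^2 + (r*c)*s := by
      rw [show r*(c*s) - β*(c*s)^2 = r*(c*s) - (β*c^2)*s^2 by ring, hβc]; ring
    rw [h3]; ring
  simp only [h2] at h
  rw [integral_const_mul] at h
  have h4 : (∫ x in Ioi (0:ℝ), x ^ m * Real.exp (r * x - β * x ^ 2))
      = c * (c^m * ∫ a in Ioi (0:ℝ), a ^ m * Real.exp (-a ^ 2 + r * c * a)) := by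
    rw [h, smul_eq_mul, ← mul_assoc, mul_inv_cancel₀ hc.ne', one_mul]
  rw [h4]; ring

lemma int_gauss (d : ℕ) {b : ℝ} (hb : 0 < b) :
    Integrable (fun ψ : EuclideanSpace ℝ (Fin d) => Real.exp (-b * ‖ψ‖^2)) := by
  have h := (GaussianFourier.integrable_cexp_neg_mul_sq_norm_add (b := (b:ℂ))
    (by simpa using hb) 0 (0 : EuclideanSpace ℝ (Fin d))).norm
  have h2 : ∀ ψ : EuclideanSpace ℝ (Fin d),
      ‖Complex.exp (-(b:ℂ) * (‖ψ‖:ℂ)^2 + 0 * ((inner ℝ (0 : EuclideanSpace ℝ (Fin d)) ψ : ℝ):ℂ))‖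
        = Real.exp (-b * ‖ψ‖^2) := by
    intro ψ
    rw [Complex.norm_exp]
    congr 1
    simp only [zero_mul, add_zero, ← Complex.ofReal_pow, ← Complex.ofReal_neg,
      ← Complex.ofReal_mul, Complex.ofReal_re, neg_mul]
  simpa only [h2] using h

end ouAux

set_option maxHeartbeats 1000000 in
/-- exponentially weighted integral bound for the kernel `K^{ji}`. -/
theorem ouKji_exp_weighted_integral_bound
    (d : ℕ) (hd : 1 ≤ d) (α δ : ℂ) (hα : 0 < α.re)
    (S : Matrix (Fin d) (Fin d) ℝ) (hS : S.transpose = -S)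
    (r : ℝ) (hr : 0 ≤ r) (t : ℝ) (ht : 0 < t) (i j : Fin d) :
    (∫ ψ : EuclideanSpace ℝ (Fin d), Real.exp (r * ‖ψ‖) * ‖ouKji d α δ S j i ψ t‖)
      ≤ (‖α‖ / α.re) ^ (((d : ℝ) + 2) / 2) * Real.exp (-δ.re * t) *
        (t * ‖α‖)⁻¹ *
        (ouI d (d + 1) ((‖α‖ ^ 2 * r ^ 2 / α.re) * t)
          + ((if i = j then (1:ℝ) else 0) / 2) * ((‖α‖ / α.re)⁻¹) *
            ouI d (d - 1) ((‖α‖ ^ 2 * r ^ 2 / α.re) * t)) := by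
  have hπ := Real.pi_pos
  have hα0 : α ≠ 0 := fun h => by simp [h] at hα
  set a := ‖α‖ with ha_def
  have ha : 0 < a := norm_pos_iff.mpr hα0
  have hb : 0 < α.re := hα
  set β := α.re / (4*a^2*t) with hβ_def
  have hβ : 0 < β := by positivity
  set c := 2*a*Real.sqrt (t/α.re) with hc_def
  have hsqrt : 0 < Real.sqrt (t/α.re) := Real.sqrt_pos.mpr (by positivity)
  have hc : 0 < c := by rw [hc_def]; positivity
  have hc2 : c^2 = 4*a^2*t/α.re := by
    rw [hc_def, mul_pow, mul_pow, Real.sq_sqrt (by positivity : (0:ℝ) ≤ t/α.re)]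
    ring
  have hβc : β*c^2 = 1 := by rw [hc2, hβ_def]; field_simp
  have hrc : r*c = 2*Real.sqrt (a^2*r^2/α.re*t) := by
    rw [hc_def, show a^2*r^2/α.re*t = (a*r)^2*(t/α.re) by ring,
      Real.sqrt_mul (by positivity), Real.sqrt_sq (by positivity)]
    ring
  set D := (if i = j then (1:ℝ) else 0) with hD_def
  have hD0 : 0 ≤ D := by rw [hD_def]; split <;> norm_num
  set A := ((2*t*a)⁻¹)^2 with hA_def
  set B := (2*t*a)⁻¹ with hB_def
  have hA0 : 0 < A := by rw [hA_def]; positivity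
  have hB0 : 0 < B := by rw [hB_def]; positivity
  set E₀ := Real.exp (-δ.re*t) * (4*Real.pi*a*t)^(-(d:ℝ)/2) with hE_def
  have hE0 : 0 < E₀ := by rw [hE_def]; positivity
  set G : ℝ → ℝ := fun ρ => E₀ * ((A*ρ^2 + B*D) * Real.exp (r*ρ - β*ρ^2)) with hG_def
  have hGnn : ∀ ρ : ℝ, 0 ≤ G ρ := by
    intro ρ
    simp only [hG_def]
    exact mul_nonneg hE0.le (mul_nonneg (add_nonneg (mul_nonneg hA0.le (sq_nonneg _))
      (mul_nonneg hB0.le hD0)) (Real.exp_pos _).le)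
  -- Step 1 : pointwise bound
  have step1 : ∀ ψ : EuclideanSpace ℝ (Fin d),
      Real.exp (r * ‖ψ‖) * ‖ouKji d α δ S j i ψ t‖ ≤ G ‖ψ‖ := by
    intro ψ
    have hK := abs_ouK d α δ hα ψ t ht
    rw [ouKji, norm_mul, hK, ← ha_def, ← hβ_def]
    have h2ta : ‖((2*(t:ℂ)*α)⁻¹)‖ = (2*t*a)⁻¹ := by
      rw [norm_inv, norm_mul, norm_mul, Complex.norm_real, Real.norm_eq_abs, abs_of_pos ht, Complex.norm_ofNat, ha_def]
    have hvi : ‖ouRot d S t (EuclideanSpace.single i (1:ℝ))‖ = 1 := by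
      rw [ouRot_norm d S hS t, EuclideanSpace.norm_single, norm_one]
    have hvj : ‖ouRot d S t (EuclideanSpace.single j (1:ℝ))‖ = 1 := by
      rw [ouRot_norm d S hS t, EuclideanSpace.norm_single, norm_one]
    have hxi : |(⟪ψ, ouRot d S t (EuclideanSpace.single i (1 : ℝ))⟫ : ℝ)| ≤ ‖ψ‖ := by
      refine le_trans (abs_real_inner_le_norm _ _) ?_
      rw [hvi, mul_one]
    have hxj : |(⟪ψ, ouRot d S t (EuclideanSpace.single j (1 : ℝ))⟫ : ℝ)| ≤ ‖ψ‖ := by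
      refine le_trans (abs_real_inner_le_norm _ _) ?_
      rw [hvj, mul_one]
    have tri : ∀ u v : ℂ, ‖(u - v)‖ ≤ ‖u‖ + ‖v‖ := fun u v => by
      simpa [sub_eq_add_neg] using norm_add_le u (-v)
    have habsP : ‖((((2 * (t:ℂ) * α)⁻¹) ^ 2 *
          ((⟪ψ, ouRot d S t (EuclideanSpace.single i (1 : ℝ))⟫ : ℝ) : ℂ) *
          ((⟪ψ, ouRot d S t (EuclideanSpace.single j (1 : ℝ))⟫ : ℝ) : ℂ)
        - (2 * (t:ℂ) * α)⁻¹ * (if i = j then 1 else 0)))‖ ≤ A*‖ψ‖^2 + B*D := by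
      refine le_trans (tri _ _) ?_
      apply add_le_add
      · rw [norm_mul, norm_mul, norm_pow, h2ta, Complex.norm_real, Complex.norm_real, Real.norm_eq_abs, Real.norm_eq_abs, hA_def]
        calc ((2*t*a)⁻¹)^2 * |(⟪ψ, ouRot d S t (EuclideanSpace.single i (1 : ℝ))⟫ : ℝ)| *
              |(⟪ψ, ouRot d S t (EuclideanSpace.single j (1 : ℝ))⟫ : ℝ)|
            ≤ ((2*t*a)⁻¹)^2 * ‖ψ‖ * ‖ψ‖ := by
              apply mul_le_mul (mul_le_mul le_rfl hxi (abs_nonneg _) (by positivity)) hxj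
                (abs_nonneg _) (by positivity)
          _ = ((2*t*a)⁻¹)^2 * ‖ψ‖^2 := by ring
      · rw [norm_mul, h2ta, hB_def, hD_def]
        split <;> simp
    have gen : ∀ p q : ℝ, p ≤ q →
        Real.exp (r*‖ψ‖) * (p * ((4*Real.pi*a*t)^(-(d:ℝ)/2) *
            Real.exp (-δ.re*t - β*‖ψ‖^2)))
          ≤ Real.exp (r*‖ψ‖) * (q * ((4*Real.pi*a*t)^(-(d:ℝ)/2) *
            Real.exp (-δ.re*t - β*‖ψ‖^2))) := by
      intro p q hpq
      have hw : (0:ℝ) ≤ (4*Real.pi*a*t)^(-(d:ℝ)/2) * Real.exp (-δ.re*t - β*‖ψ‖^2) := by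
        positivity
      exact mul_le_mul_of_nonneg_left (mul_le_mul_of_nonneg_right hpq hw) (Real.exp_pos _).le
    refine (gen _ _ habsP).trans (le_of_eq ?_)
    simp only [hG_def, hE_def]
    rw [show -δ.re*t - β*‖ψ‖^2 = (-δ.re*t) + (-(β*‖ψ‖^2)) by ring, Real.exp_add,
      show r*‖ψ‖ - β*‖ψ‖^2 = r*‖ψ‖ + (-(β*‖ψ‖^2)) by ring, Real.exp_add]
    ring
  -- scalar majorant bound
  have hGscalar : ∀ ρ : ℝ, 0 ≤ ρ →
      (A*ρ^2 + B*D) * Real.exp (r*ρ - β*ρ^2)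
        ≤ (4*A/β + B*D) * Real.exp (r^2/(2*β)) * Real.exp (-(β/4)*ρ^2) := by
    intro ρ hρ
    set X := Real.exp (-(β/4)*ρ^2) with hX_def
    have hX0 : 0 < X := Real.exp_pos _
    have hX1 : X ≤ 1 := by
      calc X ≤ Real.exp 0 := Real.exp_le_exp.mpr (by nlinarith)
        _ = 1 := Real.exp_zero
    have hsum : (0:ℝ) ≤ A*ρ^2 + B*D :=
      add_nonneg (mul_nonneg hA0.le (sq_nonneg _)) (mul_nonneg hB0.le hD0)
    have hx : ρ^2 * X ≤ 4/β := by
      have h1 : (β/4)*ρ^2 ≤ Real.exp ((β/4)*ρ^2) := by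
        have := Real.add_one_le_exp ((β/4)*ρ^2); linarith
      have h2 : (β/4)*ρ^2 * X ≤ Real.exp ((β/4)*ρ^2) * X :=
        mul_le_mul_of_nonneg_right h1 hX0.le
      rw [hX_def, ← Real.exp_add, show (β/4)*ρ^2 + (-(β/4)*ρ^2) = 0 by ring,
        Real.exp_zero] at h2
      calc ρ^2 * X = (4/β) * ((β/4)*ρ^2 * X) := by field_simp
        _ ≤ (4/β) * 1 := mul_le_mul_of_nonneg_left h2 (by positivity)
        _ = 4/β := by ring
    have hXsq : Real.exp (-(β/2)*ρ^2) = X * X := by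
      rw [hX_def, ← Real.exp_add]; congr 1; ring
    have hsplit : Real.exp (r*ρ - β*ρ^2) = Real.exp (r*ρ - (β/2)*ρ^2) * (X * X) := by
      rw [← hXsq, ← Real.exp_add]; congr 1; ring
    have hlin : Real.exp (r*ρ - (β/2)*ρ^2) ≤ Real.exp (r^2/(2*β)) :=
      Real.exp_le_exp.mpr (lin_le_sq hβ r ρ)
    rw [hsplit]
    have e1 : (A*ρ^2 + B*D) * (Real.exp (r*ρ - (β/2)*ρ^2) * (X*X))
        ≤ (A*ρ^2 + B*D) * (Real.exp (r^2/(2*β)) * (X*X)) :=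
      mul_le_mul_of_nonneg_left (mul_le_mul_of_nonneg_right hlin
        (mul_nonneg hX0.le hX0.le)) hsum
    refine e1.trans ?_
    have e2 : A*ρ^2*(X*X) + B*D*(X*X) ≤ (4*A/β)*X + B*D*X := by
      apply add_le_add
      · calc A*ρ^2*(X*X) = A*((ρ^2*X)*X) := by ring
          _ ≤ A*((4/β)*X) := by
              apply mul_le_mul_of_nonneg_left (mul_le_mul_of_nonneg_right hx hX0.le) hA0.le
          _ = (4*A/β)*X := by ring
      · calc B*D*(X*X) = (B*D)*(X*X) := by ring
          _ ≤ (B*D)*(1*X) := by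
              apply mul_le_mul_of_nonneg_left (mul_le_mul_of_nonneg_right hX1 hX0.le)
                (mul_nonneg hB0.le hD0)
          _ = B*D*X := by ring
    calc (A*ρ^2+B*D)*(Real.exp (r^2/(2*β))*(X*X))
        = Real.exp (r^2/(2*β)) * (A*ρ^2*(X*X) + B*D*(X*X)) := by ring
      _ ≤ Real.exp (r^2/(2*β)) * ((4*A/β)*X + B*D*X) :=
          mul_le_mul_of_nonneg_left e2 (Real.exp_pos _).le
      _ = (4*A/β + B*D)*Real.exp (r^2/(2*β))*X := by ring
  -- Step 2 : integrability of the majorant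
  have step2 : Integrable (fun ψ : EuclideanSpace ℝ (Fin d) => G ‖ψ‖) := by
    have hmaj : Integrable (fun ψ : EuclideanSpace ℝ (Fin d) =>
        E₀ * ((4*A/β + B*D) * Real.exp (r^2/(2*β))) * Real.exp (-(β/4)*‖ψ‖^2)) :=
      (int_gauss d (by positivity : (0:ℝ) < β/4)).const_mul _
    apply Integrable.mono' hmaj
    · have h1 : Continuous fun ρ : ℝ => r*ρ - β*ρ^2 := by fun_prop
      have hGc : Continuous G := by
        rw [hG_def]
        exact continuous_const.mul (((continuous_const.mul (continuous_pow 2)).add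
          continuous_const).mul (Real.continuous_exp.comp h1))
      exact (hGc.comp continuous_norm).aestronglyMeasurable
    · filter_upwards with ψ
      rw [Real.norm_eq_abs, abs_of_nonneg (hGnn _)]
      calc G ‖ψ‖ = E₀ * ((A*‖ψ‖^2 + B*D) * Real.exp (r*‖ψ‖ - β*‖ψ‖^2)) := by
            simp only [hG_def]
        _ ≤ E₀ * ((4*A/β + B*D) * Real.exp (r^2/(2*β)) * Real.exp (-(β/4)*‖ψ‖^2)) :=
            mul_le_mul_of_nonneg_left (hGscalar ‖ψ‖ (norm_nonneg ψ)) hE0.le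
        _ = E₀ * ((4*A/β + B*D) * Real.exp (r^2/(2*β))) * Real.exp (-(β/4)*‖ψ‖^2) := by ring
  -- Step 3 : comparison
  have step3 : (∫ ψ : EuclideanSpace ℝ (Fin d),
      Real.exp (r * ‖ψ‖) * ‖ouKji d α δ S j i ψ t‖)
        ≤ ∫ ψ : EuclideanSpace ℝ (Fin d), G ‖ψ‖ := by
    apply integral_mono_of_nonneg
    · filter_upwards with ψ
      exact mul_nonneg (Real.exp_pos _).le (norm_nonneg _)
    · exact step2
    · filter_upwards with ψ; exact step1 ψ
  refine step3.trans_eq ?_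
  -- Step 4 : compute the radial integral
  haveI : Nonempty (Fin d) := ⟨⟨0, hd⟩⟩
  haveI : Nontrivial (EuclideanSpace ℝ (Fin d)) := by
    refine ⟨EuclideanSpace.single ⟨0, hd⟩ (1:ℝ), 0, fun h => ?_⟩
    have h1 : ‖EuclideanSpace.single (⟨0, hd⟩ : Fin d) (1:ℝ)‖ = 0 := by rw [h, norm_zero]
    rw [EuclideanSpace.norm_single, norm_one] at h1
    norm_num at h1
  rw [integral_fun_norm_addHaar (volume : Measure (EuclideanSpace ℝ (Fin d))) G,
    finrank_euclideanSpace_fin]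
  have hball : ((volume : Measure (EuclideanSpace ℝ (Fin d))) (Metric.ball 0 1)).toReal
      = Real.sqrt Real.pi ^ d / Real.Gamma ((d:ℝ)/2 + 1) := by
    rw [EuclideanSpace.volume_ball, Fintype.card_fin]
    rw [ENNReal.toReal_mul, ENNReal.toReal_pow, ENNReal.toReal_ofReal (by norm_num),
      ENNReal.toReal_ofReal (by positivity), one_pow, one_mul]
  rw [measureReal_def, hball]
  have hsplitG : ∀ ρ : ℝ, ρ ∈ Ioi (0:ℝ) → ρ^(d-1) • G ρ
      = E₀ * (A * (ρ^(d+1) * Real.exp (r*ρ - β*ρ^2))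
        + (B*D) * (ρ^(d-1) * Real.exp (r*ρ - β*ρ^2))) := by
    intro ρ _
    rw [smul_eq_mul]
    simp only [hG_def]
    rw [show d+1 = (d-1)+2 by omega, pow_add]
    ring
  rw [setIntegral_congr_fun measurableSet_Ioi hsplitG]
  rw [integral_const_mul, integral_add ((int_pm (d+1) hβ r).const_mul A)
    ((int_pm (d-1) hβ r).const_mul (B*D)), integral_const_mul, integral_const_mul]
  rw [sub_int (d+1) hc hβc r, sub_int (d-1) hc hβc r,
    show d-1+1 = d from by omega, show d+1+1 = d+2 from rfl]
  simp only [hrc]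
  simp only [ouI]
  set J1 := ∫ s in Ioi (0:ℝ), s^(d+1) * Real.exp (-s^2 + 2*Real.sqrt (a^2*r^2/α.re*t)*s) with hJ1
  set J2 := ∫ s in Ioi (0:ℝ), s^(d-1) * Real.exp (-s^2 + 2*Real.sqrt (a^2*r^2/α.re*t)*s) with hJ2
  have hΓpos : 0 < Real.Gamma ((d:ℝ)/2) := Real.Gamma_pos_of_pos (by positivity)
  have hd0 : (0:ℝ) < (d:ℝ) := by exact_mod_cast hd
  have hΓ1 : Real.Gamma ((d:ℝ)/2 + 1) = ((d:ℝ)/2) * Real.Gamma ((d:ℝ)/2) :=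
    Real.Gamma_add_one (by positivity)
  have h4at : (0:ℝ) < 4*a*t := by positivity
  have hsqrtpi : Real.sqrt Real.pi ^ d = Real.pi ^ ((d:ℝ)/2) := by
    rw [Real.sqrt_eq_rpow, ← Real.rpow_natCast (Real.pi ^ ((1:ℝ)/2)) d,
      ← Real.rpow_mul hπ.le]
    congr 1; ring
  have hbase : 4*a^2*t/α.re = (4*a*t)*(a/α.re) := by field_simp
  have hcd2 : c^(d+2) = (4*a*t) ^ (((d:ℝ)+2)/2) * (a/α.re) ^ (((d:ℝ)+2)/2) := by
    have h1 : c^(d+2) = (c^2) ^ (((d:ℝ)+2)/2) := by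
      rw [← Real.rpow_natCast c 2, ← Real.rpow_mul hc.le, ← Real.rpow_natCast c (d+2)]
      congr 1; push_cast; ring
    rw [h1, hc2, hbase, Real.mul_rpow h4at.le (by positivity)]
  have hcd : c^d = (4*a*t) ^ ((d:ℝ)/2) * (a/α.re) ^ ((d:ℝ)/2) := by
    have h1 : c^d = (c^2) ^ ((d:ℝ)/2) := by
      rw [← Real.rpow_natCast c 2, ← Real.rpow_mul hc.le, ← Real.rpow_natCast c d]
      congr 1; ring
    rw [h1, hc2, hbase, Real.mul_rpow h4at.le (by positivity)]
  have hpisplit : (4*Real.pi*a*t) ^ (-(d:ℝ)/2)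
      = (4*a*t) ^ (-(d:ℝ)/2) * Real.pi ^ (-(d:ℝ)/2) := by
    rw [show 4*Real.pi*a*t = (4*a*t)*Real.pi by ring, Real.mul_rpow h4at.le hπ.le]
  have hpi1 : Real.pi ^ ((d:ℝ)/2) * Real.pi ^ (-(d:ℝ)/2) = 1 := by
    rw [← Real.rpow_add hπ, show (d:ℝ)/2 + -(d:ℝ)/2 = 0 by ring, Real.rpow_zero]
  have hz2 : (4*a*t) ^ (-(d:ℝ)/2) * (4*a*t) ^ (((d:ℝ)+2)/2) = 4*a*t := by
    rw [← Real.rpow_add h4at, show -(d:ℝ)/2 + ((d:ℝ)+2)/2 = 1 by ring, Real.rpow_one]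
  have hzd : (4*a*t) ^ (-(d:ℝ)/2) * (4*a*t) ^ ((d:ℝ)/2) = 1 := by
    rw [← Real.rpow_add h4at, show -(d:ℝ)/2 + (d:ℝ)/2 = 0 by ring, Real.rpow_zero]
  have hX : (a/α.re) ^ ((d:ℝ)/2) = (a/α.re) ^ (((d:ℝ)+2)/2) * (a/α.re)⁻¹ := by
    rw [← Real.rpow_neg_one (a/α.re), ← Real.rpow_add (by positivity)]
    congr 1; ring
  have key1 : (d:ℝ) * (Real.pi ^ ((d:ℝ)/2) / (((d:ℝ)/2) * Real.Gamma ((d:ℝ)/2)))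
      * ((4*a*t) ^ (-(d:ℝ)/2) * Real.pi ^ (-(d:ℝ)/2)) * A
      * ((4*a*t) ^ (((d:ℝ)+2)/2) * (a/α.re) ^ (((d:ℝ)+2)/2))
      = (a/α.re) ^ (((d:ℝ)+2)/2) * (t*a)⁻¹ * (2/Real.Gamma ((d:ℝ)/2)) := by
    have e : (d:ℝ) * (Real.pi ^ ((d:ℝ)/2) / (((d:ℝ)/2) * Real.Gamma ((d:ℝ)/2)))
        * ((4*a*t) ^ (-(d:ℝ)/2) * Real.pi ^ (-(d:ℝ)/2)) * A
        * ((4*a*t) ^ (((d:ℝ)+2)/2) * (a/α.re) ^ (((d:ℝ)+2)/2))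
        = ((d:ℝ) / (((d:ℝ)/2) * Real.Gamma ((d:ℝ)/2)) * A * (a/α.re) ^ (((d:ℝ)+2)/2))
          * ((Real.pi ^ ((d:ℝ)/2) * Real.pi ^ (-(d:ℝ)/2))
            * ((4*a*t) ^ (-(d:ℝ)/2) * (4*a*t) ^ (((d:ℝ)+2)/2))) := by ring
    rw [e, hpi1, hz2, one_mul, hA_def, hB_def]
    field_simp
    ring
  have key2 : (d:ℝ) * (Real.pi ^ ((d:ℝ)/2) / (((d:ℝ)/2) * Real.Gamma ((d:ℝ)/2)))
      * ((4*a*t) ^ (-(d:ℝ)/2) * Real.pi ^ (-(d:ℝ)/2)) * B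
      * ((4*a*t) ^ ((d:ℝ)/2) * ((a/α.re) ^ (((d:ℝ)+2)/2) * (a/α.re)⁻¹))
      = (a/α.re) ^ (((d:ℝ)+2)/2) * (t*a)⁻¹ * (a/α.re)⁻¹ * (1/Real.Gamma ((d:ℝ)/2)) := by
    have e : (d:ℝ) * (Real.pi ^ ((d:ℝ)/2) / (((d:ℝ)/2) * Real.Gamma ((d:ℝ)/2)))
        * ((4*a*t) ^ (-(d:ℝ)/2) * Real.pi ^ (-(d:ℝ)/2)) * B
        * ((4*a*t) ^ ((d:ℝ)/2) * ((a/α.re) ^ (((d:ℝ)+2)/2) * (a/α.re)⁻¹))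
        = ((d:ℝ) / (((d:ℝ)/2) * Real.Gamma ((d:ℝ)/2)) * B * ((a/α.re) ^ (((d:ℝ)+2)/2) * (a/α.re)⁻¹))
          * ((Real.pi ^ ((d:ℝ)/2) * Real.pi ^ (-(d:ℝ)/2))
            * ((4*a*t) ^ (-(d:ℝ)/2) * (4*a*t) ^ ((d:ℝ)/2))) := by ring
    rw [e, hpi1, hzd, one_mul, mul_one, hB_def]
    field_simp
  rw [nsmul_eq_mul, smul_eq_mul, hE_def, hΓ1, hsqrtpi, hcd2, hcd, hpisplit, hX]
  linear_combination (Real.exp (-δ.re*t) * J1) * key1 + (Real.exp (-δ.re*t) * D * J2) * key2
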